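/- (Vanishing property, part b) Assume the a_j are pairwise distinct with a_1 = 0. Let μ be a strict partition and x(μ)_i = a_{μ_i+1}. Then P_{μ;a}(x(μ)) = H_a(μ), where H_a(μ) = ∏_{k=1}^{ℓ(μ)} ∏_{j=1}^{μ_k}(a_{μ_k+1} − a_j) · ∏_{i<j} (a_{μ_i+1}+a_{μ_j+1})/(a_{μ_i+1}−a_{μ_j+1}). -/

import Mathlib

set_option linter.unusedSectionVars false
set_option linter.unnecessarySimpa false
set_option linter.unusedVariables false
set_option maxHeartbeats 1000000
set_option synthInstance.maxHeartbeats 1000000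


noncomputable section

abbrev K (n : ℕ) : Type := FractionRing (MvPolynomial (Fin n) ℂ)

def Xv {n : ℕ} (i : Fin n) : K n :=
  algebraMap (MvPolynomial (Fin n) ℂ) (K n) (MvPolynomial.X i)

def Cv {n : ℕ} (c : ℂ) : K n :=
  algebraMap (MvPolynomial (Fin n) ℂ) (K n) (MvPolynomial.C c)

/-- The product over pairs `i < j` with `i < l` of `(x i + x j)/(x i - x j)`. -/
def ratioProd {n : ℕ} (l : ℕ) (x : Fin n → K n) : K n :=
  ∏ p ∈ Finset.univ.filter (fun p : Fin n × Fin n => (p.1 : ℕ) < l ∧ p.1 < p.2),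
    (x p.1 + x p.2) / (x p.1 - x p.2)

/-- A strict partition: strictly decreasing positive parts `parts 0 > parts 1 > ⋯`,
indexed from `0`, with `parts i = 0` for `i ≥ l`. -/
structure SPartition where
  l : ℕ
  parts : ℕ → ℕ
  strict : ∀ i, i + 1 < l → parts (i + 1) < parts i
  pos : ∀ i, i < l → 0 < parts i
  zero : ∀ i, l ≤ i → parts i = 0

def SPartition.size (lam : SPartition) : ℕ := ∑ i ∈ Finset.range lam.l, lam.parts i

/-- The multiparameter Schur P-polynomial `P_{λ;a|n}`, as an element of the field of
rational functions in `n` variables (by convention `0` if `n < ℓ(λ)`). -/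
def Pmulti (lam : SPartition) (a : ℕ → ℂ) (n : ℕ) : K n :=
  if hl : lam.l ≤ n then
    Cv (((n - lam.l).factorial : ℂ))⁻¹ *
      ∑ ω : Equiv.Perm (Fin n),
        (∏ i : Fin lam.l,
            ∏ k ∈ Finset.range (lam.parts i.1),
              (Xv (ω (Fin.castLE hl i)) - Cv (a (k + 1)))) *
          ratioProd lam.l (fun j => Xv (ω j))
  else 0


/-- The evaluation point `x(λ) = (a_{λ_1+1}, …, a_{λ_{ℓ(λ)}+1}, 0, 0, …)` in `n`
variables. -/
def xpt (lam : SPartition) (a : ℕ → ℂ) (n : ℕ) : Fin n → ℂ :=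
  fun i => if (i : ℕ) < lam.l then a (lam.parts (i : ℕ) + 1) else 0

/-- `H_a(μ) = ∏_{k} (a_{μ_k+1}|a)^{μ_k} · ∏_{i<j} (a_{μ_i+1}+a_{μ_j+1})/(a_{μ_i+1}−a_{μ_j+1})`. -/
def Ha (a : ℕ → ℂ) (mu : SPartition) : ℂ :=
  (∏ k ∈ Finset.range mu.l, ∏ j ∈ Finset.range (mu.parts k), (a (mu.parts k + 1) - a (j + 1))) *
    ∏ p ∈ (Finset.range mu.l ×ˢ Finset.range mu.l).filter (fun p => p.1 < p.2),
      (a (mu.parts p.1 + 1) + a (mu.parts p.2 + 1)) /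
        (a (mu.parts p.1 + 1) - a (mu.parts p.2 + 1))

section Transfer

variable {R : Type} [CommRing R] [IsDomain R] {F : Type} [Field F] (ψ : R →+* F)

def nvS : Submonoid R where
  carrier := {r | ψ r ≠ 0}
  one_mem' := by simp
  mul_mem' := by
    intro x y hx hy
    simp only [Set.mem_setOf_eq, map_mul] at *
    exact mul_ne_zero hx hy

lemma mem_nvS {r : R} : r ∈ nvS ψ ↔ ψ r ≠ 0 := Iff.rfl

def locg : Localization (nvS ψ) →+* F :=
  IsLocalization.lift (M := nvS ψ) (S := Localization (nvS ψ)) (g := ψ)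
    (fun s => isUnit_iff_ne_zero.mpr s.2)

variable (Q : Type) [Field Q] [Algebra R Q] [IsFractionRing R Q]

lemma nvS_ne_zero {s : R} (hs : s ∈ nvS ψ) : s ≠ 0 := fun h => hs (by simp [mem_nvS, h])

lemma algmap_nvS_ne_zero {s : R} (hs : s ∈ nvS ψ) : algebraMap R Q s ≠ 0 := by
  intro h
  exact nvS_ne_zero ψ hs (IsFractionRing.injective R Q (by simpa using h))

def locj : Localization (nvS ψ) →+* Q :=
  IsLocalization.lift (M := nvS ψ) (S := Localization (nvS ψ)) (g := algebraMap R Q)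
    (fun s => isUnit_iff_ne_zero.mpr (algmap_nvS_ne_zero ψ Q s.2))

lemma locj_algebraMap (r : R) :
    locj ψ Q (algebraMap R (Localization (nvS ψ)) r) = algebraMap R Q r :=
  IsLocalization.lift_eq _ _

lemma locg_algebraMap (r : R) :
    locg ψ (algebraMap R (Localization (nvS ψ)) r) = ψ r :=
  IsLocalization.lift_eq _ _

lemma locj_injective : Function.Injective (locj ψ Q) := by
  rw [injective_iff_map_eq_zero]
  intro x hx
  obtain ⟨⟨r, s⟩, h⟩ := IsLocalization.surj (nvS ψ) x
  have h2 := congrArg (locj ψ Q) h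
  rw [map_mul, hx, zero_mul, locj_algebraMap] at h2
  have hr : r = 0 := IsFractionRing.injective R Q (by simpa using h2.symm)
  subst hr
  simp only [map_zero] at h
  have hu : IsUnit (algebraMap R (Localization (nvS ψ)) (s : R)) :=
    IsLocalization.map_units _ s
  exact (hu.mul_left_eq_zero).mp h

open Classical in
/-- division in the localization (junk value 0 if denominator vanishes). -/
def fdiv (num den : R) : Localization (nvS ψ) :=
  if h : ψ den ≠ 0 then
    IsLocalization.mk' (M := nvS ψ) (Localization (nvS ψ)) num ⟨den, h⟩ else 0

lemma fdiv_key {den : R} (h : ψ den ≠ 0) (num : R) :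
    fdiv ψ num den * algebraMap R (Localization (nvS ψ)) den
      = algebraMap R (Localization (nvS ψ)) num := by
  rw [fdiv, dif_pos h]
  exact IsLocalization.mk'_spec _ num ⟨den, h⟩

lemma locj_fdiv {den : R} (h : ψ den ≠ 0) (num : R) :
    locj ψ Q (fdiv ψ num den) = algebraMap R Q num / algebraMap R Q den := by
  rw [eq_div_iff (algmap_nvS_ne_zero ψ Q h)]
  have := congrArg (locj ψ Q) (fdiv_key ψ h num)
  rwa [map_mul, locj_algebraMap, locj_algebraMap] at this

lemma locg_fdiv {den : R} (h : ψ den ≠ 0) (num : R) :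
    locg ψ (fdiv ψ num den) = ψ num / ψ den := by
  rw [eq_div_iff h]
  have := congrArg (locg ψ) (fdiv_key ψ h num)
  rwa [map_mul, locg_algebraMap, locg_algebraMap] at this

end Transfer

namespace PmultiProof

variable (a : ℕ → ℂ) (mu : SPartition) (n : ℕ)

/-- the substitution point in `ℂ[t]` : `a`-values in the low coordinates,
`((i:ℂ)+1) • t` in the high coordinates. -/
def pt (i : Fin n) : Polynomial ℂ :=
  if (i : ℕ) < mu.l then Polynomial.C (a (mu.parts i + 1))
  else Polynomial.C (((i : ℕ) : ℂ) + 1) * Polynomial.X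

def phim : MvPolynomial (Fin n) ℂ →+* Polynomial ℂ :=
  (MvPolynomial.aeval (pt a mu n)).toRingHom

abbrev FF : Type := FractionRing (Polynomial ℂ)

def psim : MvPolynomial (Fin n) ℂ →+* FF :=
  (algebraMap (Polynomial ℂ) FF).comp (phim a mu n)

/-- the pairs indexing the ratio product -/
def pairs : Finset (Fin n × Fin n) :=
  Finset.univ.filter (fun p : Fin n × Fin n => (p.1 : ℕ) < mu.l ∧ p.1 < p.2)

lemma parts_anti : ∀ i j, i < j → j < mu.l → mu.parts j < mu.parts i := by
  intro i j hij hjl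
  induction j with
  | zero => omega
  | succ m ih =>
    have hs := mu.strict m hjl
    rcases Nat.lt_or_ge i m with h | h
    · exact lt_trans hs (ih h (by omega))
    · have : i = m := by omega
      subst this; exact hs

variable {a}

lemma a_parts_ne (ha : a 1 = 0)
    (hinj : ∀ i j : ℕ, 0 < i → 0 < j → a i = a j → i = j) :
    ∀ i, i < mu.l → a (mu.parts i + 1) ≠ 0 := by
  intro i hi h
  have := hinj (mu.parts i + 1) 1 (by omega) one_pos (by rw [h, ha])
  have := mu.pos i hi
  omega

lemma a_inj' (hinj : ∀ i j : ℕ, 0 < i → 0 < j → a i = a j → i = j)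
    {i j : ℕ} (hi : i < mu.l) (hj : j < mu.l) (hij : i ≠ j) :
    a (mu.parts i + 1) ≠ a (mu.parts j + 1) := by
  intro h
  have := hinj _ _ (by omega) (by omega) h
  rcases Nat.lt_or_ge i j with hlt | hge
  · have := parts_anti mu i j hlt hj; omega
  · have : j < i := by omega
    have := parts_anti mu j i this hi; omega

lemma pt_sub_ne (ha : a 1 = 0)
    (hinj : ∀ i j : ℕ, 0 < i → 0 < j → a i = a j → i = j)
    {i j : Fin n} (hij : i ≠ j) : pt a mu n i - pt a mu n j ≠ 0 := by
  have hvalne : (i : ℕ) ≠ (j : ℕ) := fun h => hij (Fin.val_injective h)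
  by_cases hi : (i : ℕ) < mu.l <;> by_cases hj : (j : ℕ) < mu.l
  · rw [pt, pt, if_pos hi, if_pos hj, ← Polynomial.C_sub]
    simp only [ne_eq, Polynomial.C_eq_zero, sub_eq_zero]
    exact a_inj' mu hinj hi hj hvalne
  · intro h
    have := congrArg (Polynomial.eval 0) h
    rw [pt, pt, if_pos hi, if_neg hj] at this
    simp at this
    exact a_parts_ne mu ha hinj i hi this
  · intro h
    have := congrArg (Polynomial.eval 0) h
    rw [pt, pt, if_neg hi, if_pos hj] at this
    simp [sub_eq_zero] at this
    exact a_parts_ne mu ha hinj j hj this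
  · intro h
    have := congrArg (Polynomial.eval 1) h
    rw [pt, pt, if_neg hi, if_neg hj] at this
    simp [sub_eq_zero] at this
    exact hvalne (by exact_mod_cast this)

lemma phim_X (i : Fin n) : phim a mu n (MvPolynomial.X i) = pt a mu n i := by
  simp [phim]

lemma phim_C (c : ℂ) : phim a mu n (MvPolynomial.C c) = Polynomial.C c := by
  simp [phim]

lemma psim_sub_ne (ha : a 1 = 0)
    (hinj : ∀ i j : ℕ, 0 < i → 0 < j → a i = a j → i = j)
    {i j : Fin n} (hij : i ≠ j) :
    psim a mu n (MvPolynomial.X i - MvPolynomial.X j) ≠ 0 := by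
  rw [psim, RingHom.comp_apply, map_sub, phim_X, phim_X]
  intro h
  exact pt_sub_ne mu n ha hinj hij
    (IsFractionRing.injective (Polynomial ℂ) FF (by simpa using h))

variable (a)

def PL (hm : mu.l ≤ n) : Localization (nvS (psim a mu n)) :=
  algebraMap (MvPolynomial (Fin n) ℂ) (Localization (nvS (psim a mu n)))
      (MvPolynomial.C (((n - mu.l).factorial : ℂ))⁻¹) *
    ∑ ω : Equiv.Perm (Fin n),
      (∏ i : Fin mu.l, ∏ k ∈ Finset.range (mu.parts i.1),
          algebraMap (MvPolynomial (Fin n) ℂ) (Localization (nvS (psim a mu n)))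
            (MvPolynomial.X (ω (Fin.castLE hm i)) - MvPolynomial.C (a (k + 1)))) *
        ∏ q ∈ pairs mu n,
          fdiv (psim a mu n) (MvPolynomial.X (ω q.1) + MvPolynomial.X (ω q.2))
            (MvPolynomial.X (ω q.1) - MvPolynomial.X (ω q.2))

variable {a}

lemma pairs_ne {q : Fin n × Fin n} (hq : q ∈ pairs mu n) (ω : Equiv.Perm (Fin n)) :
    ω q.1 ≠ ω q.2 := by
  rw [pairs, Finset.mem_filter] at hq
  exact fun h => absurd (ω.injective h) (ne_of_lt hq.2.2)

lemma locj_PL (ha : a 1 = 0)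
    (hinj : ∀ i j : ℕ, 0 < i → 0 < j → a i = a j → i = j) (hm : mu.l ≤ n) :
    locj (psim a mu n) (K n) (PL a mu n hm) = Pmulti mu a n := by
  rw [Pmulti, dif_pos hm, PL, map_mul, map_sum, locj_algebraMap]
  congr 1
  refine Finset.sum_congr rfl fun ω _ => ?_
  rw [map_mul, map_prod]
  congr 1
  · refine Finset.prod_congr rfl fun i _ => ?_
    rw [map_prod]
    exact Finset.prod_congr rfl fun k _ => by rw [locj_algebraMap, map_sub]; rfl
  · rw [map_prod, ratioProd]
    refine Finset.prod_congr rfl fun q hq => ?_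
    rw [locj_fdiv _ _ (psim_sub_ne mu n ha hinj (pairs_ne mu n hq ω)), map_add, map_sub]
    rfl

lemma stage1 (ha : a 1 = 0)
    (hinj : ∀ i j : ℕ, 0 < i → 0 < j → a i = a j → i = j) (hm : mu.l ≤ n)
    (p : MvPolynomial (Fin n) ℂ)
    (hp : algebraMap (MvPolynomial (Fin n) ℂ) (K n) p = Pmulti mu a n) :
    algebraMap (Polynomial ℂ) FF (phim a mu n p) =
      algebraMap (Polynomial ℂ) FF (Polynomial.C ((((n - mu.l).factorial : ℂ))⁻¹)) *
        ∑ ω : Equiv.Perm (Fin n),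
          (∏ i : Fin mu.l, ∏ k ∈ Finset.range (mu.parts i.1),
              algebraMap (Polynomial ℂ) FF
                (pt a mu n (ω (Fin.castLE hm i)) - Polynomial.C (a (k + 1)))) *
          ∏ q ∈ pairs mu n,
            algebraMap (Polynomial ℂ) FF (pt a mu n (ω q.1) + pt a mu n (ω q.2)) /
              algebraMap (Polynomial ℂ) FF (pt a mu n (ω q.1) - pt a mu n (ω q.2)) := by
  have h1 : algebraMap _ (Localization (nvS (psim a mu n))) p = PL a mu n hm :=
    locj_injective _ (K n)
      (by rw [locj_algebraMap, hp, locj_PL mu n ha hinj hm])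
  have h2 := congrArg (locg (psim a mu n)) h1
  rw [locg_algebraMap] at h2
  have hL : psim a mu n p = algebraMap (Polynomial ℂ) FF (phim a mu n p) := rfl
  rw [hL] at h2
  rw [h2, PL, map_mul, map_sum, locg_algebraMap]
  have hC : psim a mu n (MvPolynomial.C (((n - mu.l).factorial : ℂ))⁻¹) =
      algebraMap (Polynomial ℂ) FF (Polynomial.C ((((n - mu.l).factorial : ℂ))⁻¹)) := by
    rw [psim, RingHom.comp_apply, phim_C]
  rw [hC]
  congr 1
  refine Finset.sum_congr rfl fun ω _ => ?_
  rw [map_mul, map_prod]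
  congr 1
  · refine Finset.prod_congr rfl fun i _ => ?_
    rw [map_prod]
    refine Finset.prod_congr rfl fun k _ => ?_
    rw [locg_algebraMap, psim, RingHom.comp_apply, map_sub, phim_X, phim_C]
  · rw [map_prod]
    refine Finset.prod_congr rfl fun q hq => ?_
    rw [locg_fdiv _ (psim_sub_ne mu n ha hinj (pairs_ne mu n hq ω))]
    simp only [psim, RingHom.comp_apply, map_add, map_sub, phim_X]

variable (a)

def rnum (u v : Fin n) : Polynomial ℂ :=
  if mu.l ≤ (u : ℕ) ∧ mu.l ≤ (v : ℕ) then
    Polynomial.C (((((u : ℕ) : ℂ)) + 1) + ((((v : ℕ) : ℂ)) + 1))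
  else pt a mu n u + pt a mu n v

def rden (u v : Fin n) : Polynomial ℂ :=
  if mu.l ≤ (u : ℕ) ∧ mu.l ≤ (v : ℕ) then
    Polynomial.C (((((u : ℕ) : ℂ)) + 1) - ((((v : ℕ) : ℂ)) + 1))
  else pt a mu n u - pt a mu n v

variable {a}

lemma pt_eval0 (i : Fin n) : (pt a mu n i).eval 0 = xpt mu a n i := by
  rw [pt, xpt]
  split <;> simp

lemma ratio_eq (u v : Fin n) :
    algebraMap (Polynomial ℂ) FF (pt a mu n u + pt a mu n v) /
      algebraMap (Polynomial ℂ) FF (pt a mu n u - pt a mu n v) =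
    algebraMap (Polynomial ℂ) FF (rnum a mu n u v) /
      algebraMap (Polynomial ℂ) FF (rden a mu n u v) := by
  by_cases h : mu.l ≤ (u : ℕ) ∧ mu.l ≤ (v : ℕ)
  · have e1 : pt a mu n u + pt a mu n v
        = Polynomial.C (((((u : ℕ) : ℂ)) + 1) + ((((v : ℕ) : ℂ)) + 1)) * Polynomial.X := by
      rw [pt, pt, if_neg (by omega), if_neg (by omega), ← add_mul, ← Polynomial.C_add]
    have e2 : pt a mu n u - pt a mu n v
        = Polynomial.C (((((u : ℕ) : ℂ)) + 1) - ((((v : ℕ) : ℂ)) + 1)) * Polynomial.X := by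
      rw [pt, pt, if_neg (by omega), if_neg (by omega), ← sub_mul, ← Polynomial.C_sub]
    have hX : algebraMap (Polynomial ℂ) FF Polynomial.X ≠ 0 := by
      intro hx
      exact Polynomial.X_ne_zero
        (IsFractionRing.injective (Polynomial ℂ) FF (by simpa using hx))
    rw [rnum, rden, if_pos h, if_pos h, e1, e2, map_mul, map_mul,
      mul_div_mul_right _ _ hX]
  · rw [rnum, rden, if_neg h, if_neg h]

lemma rden_eval_ne (ha : a 1 = 0)
    (hinj : ∀ i j : ℕ, 0 < i → 0 < j → a i = a j → i = j)
    {u v : Fin n} (huv : u ≠ v) : (rden a mu n u v).eval 0 ≠ 0 := by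
  have hvalne : (u : ℕ) ≠ (v : ℕ) := fun h => huv (Fin.val_injective h)
  rw [rden]
  by_cases h : mu.l ≤ (u : ℕ) ∧ mu.l ≤ (v : ℕ)
  · rw [if_pos h]
    simp only [Polynomial.eval_C, ne_eq, sub_eq_zero, add_left_inj]
    exact_mod_cast hvalne
  · rw [if_neg h, Polynomial.eval_sub, pt_eval0, pt_eval0, xpt, xpt]
    by_cases hu : (u : ℕ) < mu.l <;> by_cases hv : (v : ℕ) < mu.l
    · rw [if_pos hu, if_pos hv]
      exact sub_ne_zero.mpr (a_inj' mu hinj hu hv hvalne)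
    · rw [if_pos hu, if_neg hv, sub_zero]
      exact a_parts_ne mu ha hinj u hu
    · rw [if_neg hu, if_pos hv, zero_sub, neg_ne_zero]
      exact a_parts_ne mu ha hinj v hv
    · omega

lemma stage2 (ha : a 1 = 0)
    (hinj : ∀ i j : ℕ, 0 < i → 0 < j → a i = a j → i = j) (hm : mu.l ≤ n)
    (p : MvPolynomial (Fin n) ℂ)
    (hp : algebraMap (MvPolynomial (Fin n) ℂ) (K n) p = Pmulti mu a n) :
    algebraMap (Polynomial ℂ) FF (phim a mu n p) =
      algebraMap (Polynomial ℂ) FF (Polynomial.C ((((n - mu.l).factorial : ℂ))⁻¹)) *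
        ∑ ω : Equiv.Perm (Fin n),
          (∏ i : Fin mu.l, ∏ k ∈ Finset.range (mu.parts i.1),
              algebraMap (Polynomial ℂ) FF
                (pt a mu n (ω (Fin.castLE hm i)) - Polynomial.C (a (k + 1)))) *
          ∏ q ∈ pairs mu n,
            algebraMap (Polynomial ℂ) FF (rnum a mu n (ω q.1) (ω q.2)) /
              algebraMap (Polynomial ℂ) FF (rden a mu n (ω q.1) (ω q.2)) := by
  rw [stage1 mu n ha hinj hm p hp]
  congr 1
  refine Finset.sum_congr rfl fun ω _ => ?_
  congr 1
  exact Finset.prod_congr rfl fun q _ => ratio_eq mu n (ω q.1) (ω q.2)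

def ev0 : Polynomial ℂ →+* ℂ := Polynomial.evalRingHom 0

variable (a)

def QL (hm : mu.l ≤ n) : Localization (nvS ev0) :=
  algebraMap (Polynomial ℂ) (Localization (nvS ev0))
      (Polynomial.C ((((n - mu.l).factorial : ℂ))⁻¹)) *
    ∑ ω : Equiv.Perm (Fin n),
      (∏ i : Fin mu.l, ∏ k ∈ Finset.range (mu.parts i.1),
          algebraMap (Polynomial ℂ) (Localization (nvS ev0))
            (pt a mu n (ω (Fin.castLE hm i)) - Polynomial.C (a (k + 1)))) *
        ∏ q ∈ pairs mu n,
          fdiv ev0 (rnum a mu n (ω q.1) (ω q.2)) (rden a mu n (ω q.1) (ω q.2))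

variable {a}

lemma ev0_rden_ne (ha : a 1 = 0)
    (hinj : ∀ i j : ℕ, 0 < i → 0 < j → a i = a j → i = j)
    {u v : Fin n} (huv : u ≠ v) : ev0 (rden a mu n u v) ≠ 0 :=
  rden_eval_ne mu n ha hinj huv

lemma stage3 (ha : a 1 = 0)
    (hinj : ∀ i j : ℕ, 0 < i → 0 < j → a i = a j → i = j) (hm : mu.l ≤ n)
    (p : MvPolynomial (Fin n) ℂ)
    (hp : algebraMap (MvPolynomial (Fin n) ℂ) (K n) p = Pmulti mu a n) :
    Polynomial.eval 0 (phim a mu n p) =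
      (((n - mu.l).factorial : ℂ))⁻¹ *
        ∑ ω : Equiv.Perm (Fin n),
          (∏ i : Fin mu.l, ∏ k ∈ Finset.range (mu.parts i.1),
              ((pt a mu n (ω (Fin.castLE hm i))).eval 0 - a (k + 1))) *
          ∏ q ∈ pairs mu n,
            ((rnum a mu n (ω q.1) (ω q.2)).eval 0 / (rden a mu n (ω q.1) (ω q.2)).eval 0) := by
  have hjQ : locj ev0 FF (QL a mu n hm)
      = algebraMap (Polynomial ℂ) FF (phim a mu n p) := by
    rw [stage2 mu n ha hinj hm p hp, QL, map_mul, map_sum, locj_algebraMap]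
    congr 1
    refine Finset.sum_congr rfl fun ω _ => ?_
    rw [map_mul, map_prod]
    congr 1
    · refine Finset.prod_congr rfl fun i _ => ?_
      rw [map_prod]
      exact Finset.prod_congr rfl fun k _ => locj_algebraMap _ _ _
    · rw [map_prod]
      refine Finset.prod_congr rfl fun q hq => ?_
      exact locj_fdiv _ _ (ev0_rden_ne mu n ha hinj (pairs_ne mu n hq ω)) _
  have h1 : algebraMap (Polynomial ℂ) (Localization (nvS ev0)) (phim a mu n p)
      = QL a mu n hm :=
    locj_injective _ FF (by rw [locj_algebraMap, hjQ])
  have h2 := congrArg (locg ev0) h1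
  rw [locg_algebraMap] at h2
  have hev : ∀ r : Polynomial ℂ, ev0 r = Polynomial.eval 0 r := fun r => rfl
  rw [← hev, h2, QL, map_mul, map_sum, locg_algebraMap]
  have hC : ev0 (Polynomial.C ((((n - mu.l).factorial : ℂ))⁻¹))
      = (((n - mu.l).factorial : ℂ))⁻¹ := Polynomial.eval_C
  rw [hC]
  congr 1
  refine Finset.sum_congr rfl fun ω _ => ?_
  rw [map_mul, map_prod]
  congr 1
  · refine Finset.prod_congr rfl fun i _ => ?_
    rw [map_prod]
    refine Finset.prod_congr rfl fun k _ => ?_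
    rw [locg_algebraMap]
    simp [ev0]
  · rw [map_prod]
    refine Finset.prod_congr rfl fun q hq => ?_
    exact locg_fdiv _ (ev0_rden_ne mu n ha hinj (pairs_ne mu n hq ω)) _

variable (a)

def Tval (hm : mu.l ≤ n) (ω : Equiv.Perm (Fin n)) : ℂ :=
  (∏ i : Fin mu.l, ∏ k ∈ Finset.range (mu.parts i.1),
      ((pt a mu n (ω (Fin.castLE hm i))).eval 0 - a (k + 1))) *
  ∏ q ∈ pairs mu n,
    ((rnum a mu n (ω q.1) (ω q.2)).eval 0 / (rden a mu n (ω q.1) (ω q.2)).eval 0)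

variable {a}

lemma Tval_ne_zero_fixes (ha : a 1 = 0)
    (hinj : ∀ i j : ℕ, 0 < i → 0 < j → a i = a j → i = j) (hm : mu.l ≤ n)
    (ω : Equiv.Perm (Fin n)) (hne : Tval a mu n hm ω ≠ 0) :
    ∀ i : Fin n, (i : ℕ) < mu.l → ω i = i := by
  have hN := left_ne_zero_of_mul hne
  have hfac : ∀ i : Fin mu.l, ∀ k ∈ Finset.range (mu.parts i.1),
      (pt a mu n (ω (Fin.castLE hm i))).eval 0 - a (k + 1) ≠ 0 := by
    intro i k hk
    exact Finset.prod_ne_zero_iff.mp (Finset.prod_ne_zero_iff.mp hN i (Finset.mem_univ i)) k hk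
  have hxpt : ∀ i : Fin mu.l, ∀ k ∈ Finset.range (mu.parts i.1),
      xpt mu a n (ω (Fin.castLE hm i)) ≠ a (k + 1) := by
    intro i k hk
    have := hfac i k hk
    rw [pt_eval0] at this
    exact sub_ne_zero.mp this
  have key : ∀ i : Fin mu.l, (ω (Fin.castLE hm i) : ℕ) < mu.l ∧
      mu.parts i.1 ≤ mu.parts ((ω (Fin.castLE hm i)) : ℕ) := by
    intro i
    have hlow : (ω (Fin.castLE hm i) : ℕ) < mu.l := by
      by_contra h
      have h0 : (0 : ℕ) ∈ Finset.range (mu.parts i.1) :=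
        Finset.mem_range.mpr (mu.pos i.1 i.isLt)
      have := hxpt i 0 h0
      rw [xpt, if_neg h] at this
      exact this ha.symm
    refine ⟨hlow, ?_⟩
    by_contra h
    have hk : mu.parts ((ω (Fin.castLE hm i)) : ℕ) ∈ Finset.range (mu.parts i.1) :=
      Finset.mem_range.mpr (by omega)
    have := hxpt i _ hk
    rw [xpt, if_pos hlow] at this
    exact this rfl
  have hle : ∀ i : Fin mu.l, (ω (Fin.castLE hm i) : ℕ) ≤ (i : ℕ) := by
    intro i
    by_contra h
    have hlt : (i : ℕ) < (ω (Fin.castLE hm i) : ℕ) := by omega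
    have := parts_anti mu (i : ℕ) ((ω (Fin.castLE hm i)) : ℕ) hlt (key i).1
    have := (key i).2
    omega
  suffices H : ∀ m : ℕ, ∀ i : Fin n, (i : ℕ) = m → (i : ℕ) < mu.l → ω i = i by
    exact fun i hi => H (i : ℕ) i rfl hi
  intro m
  induction m using Nat.strong_induction_on with
  | _ m IH =>
    intro i him hi
    have hcast : Fin.castLE hm ⟨(i : ℕ), hi⟩ = i := Fin.ext rfl
    have h1 : (ω i : ℕ) ≤ (i : ℕ) := by
      have := hle ⟨(i : ℕ), hi⟩
      rwa [hcast] at this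
    by_contra hne2
    have h2 : (ω i : ℕ) < (i : ℕ) := lt_of_le_of_ne h1 fun h => hne2 (Fin.ext h)
    have h3 : ω (ω i) = ω i :=
      IH (ω i : ℕ) (by omega) (ω i) rfl (by omega)
    exact hne2 (ω.injective h3)

lemma Tval_fixed (ha : a 1 = 0)
    (hinj : ∀ i j : ℕ, 0 < i → 0 < j → a i = a j → i = j) (hm : mu.l ≤ n)
    (ω : Equiv.Perm (Fin n)) (hfix : ∀ i : Fin n, (i : ℕ) < mu.l → ω i = i) :
    Tval a mu n hm ω = Ha a mu := by
  have hhigh : ∀ x : Fin n, ¬ (x : ℕ) < mu.l → ¬ ((ω x : ℕ) < mu.l) := by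
    intro x hx h
    have := hfix (ω x) h
    have h4 : ω x = x := ω.injective this
    rw [h4] at h
    exact hx h
  rw [Tval, Ha]
  congr 1
  · rw [← Fin.prod_univ_eq_prod_range
      (fun k => ∏ j ∈ Finset.range (mu.parts k), (a (mu.parts k + 1) - a (j + 1))) mu.l]
    refine Finset.prod_congr rfl fun i _ => Finset.prod_congr rfl fun k _ => ?_
    rw [hfix (Fin.castLE hm i) i.isLt, pt_eval0, xpt, if_pos (show ((Fin.castLE hm i : Fin n) : ℕ) < mu.l from i.isLt)]
    rfl
  · rw [← Finset.prod_filter_mul_prod_filter_not (pairs mu n) (fun q => ((q.2 : ℕ) < mu.l))]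
    have h2 : ∏ q ∈ (pairs mu n).filter (fun q => ¬ ((q.2 : ℕ) < mu.l)),
        ((rnum a mu n (ω q.1) (ω q.2)).eval 0 / (rden a mu n (ω q.1) (ω q.2)).eval 0) = 1 := by
      refine Finset.prod_eq_one fun q hq => ?_
      rw [Finset.mem_filter] at hq
      obtain ⟨hq1, hq2⟩ := hq
      rw [pairs, Finset.mem_filter] at hq1
      have hlow1 : (q.1 : ℕ) < mu.l := hq1.2.1
      have hfix1 : ω q.1 = q.1 := hfix q.1 hlow1
      have hhigh2 : ¬ ((ω q.2 : ℕ) < mu.l) := hhigh q.2 hq2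
      have hcond : ¬ (mu.l ≤ ((ω q.1 : Fin n) : ℕ) ∧ mu.l ≤ ((ω q.2 : Fin n) : ℕ)) := by
        rw [hfix1]; omega
      rw [rnum, rden, if_neg hcond, if_neg hcond, hfix1]
      rw [Polynomial.eval_add, Polynomial.eval_sub, pt_eval0, pt_eval0]
      rw [xpt, if_pos hlow1]
      rw [show xpt mu a n (ω q.2) = 0 from by rw [xpt, if_neg hhigh2]]
      rw [add_zero, sub_zero]
      exact div_self (a_parts_ne mu ha hinj q.1 hlow1)
    rw [h2, mul_one]
    refine Finset.prod_bij (fun q _ => ((q.1 : ℕ), (q.2 : ℕ))) ?_ ?_ ?_ ?_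
    · intro q hq
      rw [Finset.mem_filter] at hq
      obtain ⟨hq1, hq2⟩ := hq
      rw [pairs, Finset.mem_filter] at hq1
      rw [Finset.mem_filter, Finset.mem_product, Finset.mem_range, Finset.mem_range]
      exact ⟨⟨hq1.2.1, hq2⟩, hq1.2.2⟩
    · intro q1 h1 q2 h2 h
      rw [Prod.mk.injEq] at h
      exact Prod.ext (Fin.val_injective h.1) (Fin.val_injective h.2)
    · intro b hb
      rw [Finset.mem_filter, Finset.mem_product, Finset.mem_range, Finset.mem_range] at hb
      obtain ⟨⟨hb1, hb2⟩, hb3⟩ := hb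
      refine ⟨(⟨b.1, by omega⟩, ⟨b.2, by omega⟩), ?_, rfl⟩
      rw [Finset.mem_filter, pairs, Finset.mem_filter]
      exact ⟨⟨Finset.mem_univ _, hb1, by simp [Fin.lt_def, hb3]⟩, hb2⟩
    · intro q hq
      rw [Finset.mem_filter] at hq
      obtain ⟨hq1, hq2⟩ := hq
      rw [pairs, Finset.mem_filter] at hq1
      have hlow1 : (q.1 : ℕ) < mu.l := hq1.2.1
      have hf1 : ω q.1 = q.1 := hfix q.1 hlow1
      have hf2 : ω q.2 = q.2 := hfix q.2 hq2
      have hcond : ¬ (mu.l ≤ ((ω q.1 : Fin n) : ℕ) ∧ mu.l ≤ ((ω q.2 : Fin n) : ℕ)) := by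
        rw [hf1]; omega
      rw [rnum, rden, if_neg hcond, if_neg hcond, hf1, hf2]
      rw [Polynomial.eval_add, Polynomial.eval_sub, pt_eval0, pt_eval0]
      rw [xpt, if_pos hlow1]
      rw [show xpt mu a n q.2 = a (mu.parts (q.2 : ℕ) + 1) from by rw [xpt, if_pos hq2]]

lemma card_fixes (hm : mu.l ≤ n) :
    ((Finset.univ : Finset (Equiv.Perm (Fin n))).filter
      (fun ω => ∀ i : Fin n, (i : ℕ) < mu.l → ω i = i)).card = (n - mu.l).factorial := by
  classical
  have hcard : Fintype.card {x : Fin n // mu.l ≤ (x : ℕ)} = n - mu.l := by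
    rw [Fintype.card_subtype]
    refine (Finset.card_bij (fun (x : Fin n) (_ : x ∈ Finset.univ.filter fun x : Fin n => mu.l ≤ (x : ℕ)) => (x : ℕ)) ?_ ?_ ?_).trans (Nat.card_Ico mu.l n)
    · intro x hx
      rw [Finset.mem_filter] at hx
      exact Finset.mem_Ico.mpr ⟨hx.2, x.isLt⟩
    · intro x1 h1 x2 h2 h
      exact Fin.val_injective h
    · intro b hb
      rw [Finset.mem_Ico] at hb
      exact ⟨⟨b, hb.2⟩, Finset.mem_filter.mpr ⟨Finset.mem_univ _, hb.1⟩, rfl⟩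
  have hbij : ((Finset.univ : Finset (Equiv.Perm (Fin n))).filter
      (fun ω => ∀ i : Fin n, (i : ℕ) < mu.l → ω i = i)).card
      = Fintype.card (Equiv.Perm {x : Fin n // mu.l ≤ (x : ℕ)}) := by
    rw [Fintype.card]
    refine (Finset.card_bij
      (fun (σ : Equiv.Perm {x : Fin n // mu.l ≤ (x : ℕ)}) _ => Equiv.Perm.ofSubtype σ)
      ?_ ?_ ?_).symm
    · intro σ _
      rw [Finset.mem_filter]
      refine ⟨Finset.mem_univ _, fun i hi => ?_⟩
      exact Equiv.Perm.ofSubtype_apply_of_not_mem σ (by omega)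
    · intro σ1 _ σ2 _ h
      ext x
      have := congrFun (congrArg (fun (τ : Equiv.Perm (Fin n)) => (τ : Fin n → Fin n)) h) (x : Fin n)
      rw [Equiv.Perm.ofSubtype_apply_of_mem σ1 x.2, Equiv.Perm.ofSubtype_apply_of_mem σ2 x.2] at this
      exact congrArg Fin.val this
    · intro ω hω
      rw [Finset.mem_filter] at hω
      have hfix := hω.2
      have h1 : ∀ x : Fin n, mu.l ≤ (x : ℕ) ↔ mu.l ≤ ((ω x : Fin n) : ℕ) := by
        intro x
        constructor
        · intro hx
          by_contra h
          have := hfix (ω x) (by omega)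
          have hxx := ω.injective this
          omega
        · intro hx
          by_contra h
          have := hfix x (by omega)
          rw [this] at hx
          omega
      refine ⟨ω.subtypePerm (fun x => (h1 x).symm), Finset.mem_univ _, ?_⟩
      exact Equiv.Perm.ofSubtype_subtypePerm (fun x => (h1 x).symm) fun x hx => by
        by_contra h
        exact hx (hfix x (by omega))
  rw [hbij, Fintype.card_perm, hcard]

lemma stage4 (ha : a 1 = 0)
    (hinj : ∀ i j : ℕ, 0 < i → 0 < j → a i = a j → i = j) (hm : mu.l ≤ n) :
    (((n - mu.l).factorial : ℂ))⁻¹ * ∑ ω : Equiv.Perm (Fin n), Tval a mu n hm ω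
      = Ha a mu := by
  classical
  rw [← Finset.sum_filter_of_ne
    (p := fun ω : Equiv.Perm (Fin n) => ∀ i : Fin n, (i : ℕ) < mu.l → ω i = i)
    (fun ω _ h => Tval_ne_zero_fixes mu n ha hinj hm ω h)]
  rw [Finset.sum_congr rfl (fun ω hω =>
    Tval_fixed mu n ha hinj hm ω (Finset.mem_filter.mp hω).2)]
  rw [Finset.sum_const, card_fixes mu n hm, nsmul_eq_mul, ← mul_assoc,
    inv_mul_cancel₀ (Nat.cast_ne_zero.mpr (Nat.factorial_ne_zero _)), one_mul]

end PmultiProof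

/-- Vanishing property (part b): `P_{μ;a}(x(μ)) = H_a(μ)` when the `a_j` are pairwise
distinct and `a_1 = 0`.  (Evaluation is performed on a polynomial representative of the
rational function `P_{μ;a|n}`.) -/
theorem Pmulti_eval_self
    (a : ℕ → ℂ) (ha : a 1 = 0)
    (hinj : ∀ i j : ℕ, 0 < i → 0 < j → a i = a j → i = j)
    (mu : SPartition) (n : ℕ) (hm : mu.l ≤ n)
    (p : MvPolynomial (Fin n) ℂ)
    (hp : algebraMap (MvPolynomial (Fin n) ℂ) (K n) p = Pmulti mu a n) :
    MvPolynomial.eval (xpt mu a n) p = Ha a mu := by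
  have hhom : (MvPolynomial.eval (xpt mu a n)) =
      (Polynomial.evalRingHom (0 : ℂ)).comp (PmultiProof.phim a mu n) := by
    apply MvPolynomial.ringHom_ext
    · intro c
      simp [PmultiProof.phim]
    · intro i
      simp only [MvPolynomial.eval_X, RingHom.comp_apply, PmultiProof.phim_X,
        Polynomial.coe_evalRingHom]
      rw [PmultiProof.pt_eval0]
  have heq : MvPolynomial.eval (xpt mu a n) p
      = Polynomial.eval 0 (PmultiProof.phim a mu n p) := by
    rw [hhom]; rfl
  rw [heq, PmultiProof.stage3 mu n ha hinj hm p hp]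
  exact PmultiProof.stage4 mu n ha hinj hm

end
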